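/- On the polynomial ring P_{kn} with its commuting gl_k and gl_n actions, the operators I^{(k)} − k Σ_{a=1}^k e_{aa}^{(k)} and I^{(n)} − n Σ_{i=1}^n e_{ii}^{(n)} act identically, where I^{(k)} = Σ_{a,b=1}^k e_{ab}^{(k)} e_{ba}^{(k)} and I^{(n)} = Σ_{i,j=1}^n e_{ij}^{(n)} e_{ji}^{(n)} are the respective Casimir elements realized as differential operators. -/
import Mathlib


open MvPolynomial

/-- The `gl_k`-action on `P_{kn} = ℂ[x_{ai}]`: `e_{ab} ↦ Σ_i x_{ai} ∂_{bi}`. -/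
noncomputable def glkOp (k n : ℕ) (a b : Fin k) :
    Module.End ℂ (MvPolynomial (Fin k × Fin n) ℂ) :=
  ∑ i : Fin n,
    (LinearMap.mulLeft ℂ (X (a, i) : MvPolynomial (Fin k × Fin n) ℂ)) ∘ₗ
      (pderiv (b, i) : Derivation ℂ (MvPolynomial (Fin k × Fin n) ℂ)
        (MvPolynomial (Fin k × Fin n) ℂ)).toLinearMap

/-- The `gl_n`-action on `P_{kn} = ℂ[x_{ai}]`: `e_{ij} ↦ Σ_a x_{ai} ∂_{aj}`. -/
noncomputable def glnOp (k n : ℕ) (i j : Fin n) :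
    Module.End ℂ (MvPolynomial (Fin k × Fin n) ℂ) :=
  ∑ a : Fin k,
    (LinearMap.mulLeft ℂ (X (a, i) : MvPolynomial (Fin k × Fin n) ℂ)) ∘ₗ
      (pderiv (a, j) : Derivation ℂ (MvPolynomial (Fin k × Fin n) ℂ)
        (MvPolynomial (Fin k × Fin n) ℂ)).toLinearMap

namespace CasAux

variable {σ : Type*} [DecidableEq σ]

lemma pderiv_swap (u v : σ) (p : MvPolynomial σ ℂ) :
    pderiv u (pderiv v p) = pderiv v (pderiv u p) := by
  induction p using MvPolynomial.induction_on with
  | C a => simp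
  | add p q hp hq => simp [hp, hq]
  | mul_X p s hp =>
    simp only [pderiv_mul, pderiv_X, Pi.single_apply, map_add, hp]
    split_ifs <;> simp <;> ring

/-- Multiplication by `X v` as an endomorphism. -/
noncomputable def Xc (v : σ) : Module.End ℂ (MvPolynomial σ ℂ) :=
  LinearMap.mulLeft ℂ (X v)

/-- Partial derivative as an endomorphism. -/
noncomputable def Dc (v : σ) : Module.End ℂ (MvPolynomial σ ℂ) :=
  (pderiv v : Derivation ℂ (MvPolynomial σ ℂ) (MvPolynomial σ ℂ)).toLinearMap

lemma DX (u v : σ) :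
    Dc u * Xc v = Xc v * Dc u + if u = v then 1 else 0 := by
  ext p
  by_cases h : u = v <;>
    simp [Dc, Xc, Module.End.mul_apply, pderiv_mul, Pi.single_apply, h, eq_comm]

lemma Dc_comm (u v : σ) : Dc u * Dc v = Dc v * Dc u :=
  LinearMap.ext fun p => pderiv_swap u v p

/-- Key expansion of a product of "x·∂"-type sums. -/
lemma expand {ι : Type*} [Fintype ι] [DecidableEq ι]
    (f g u v : ι → Module.End ℂ (MvPolynomial σ ℂ))
    (h : ∀ i j, g i * u j = u j * g i + if i = j then 1 else 0) :
    (∑ i, f i * g i) * (∑ j, u j * v j)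
      = (∑ i, ∑ j, f i * u j * g i * v j) + ∑ i, f i * v i := by
  rw [Finset.sum_mul_sum]
  have key : ∀ i j : ι, (f i * g i) * (u j * v j)
      = f i * u j * g i * v j + if i = j then f i * v j else 0 := by
    intro i j
    have : f i * g i * (u j * v j) = f i * (g i * u j) * v j := by
      noncomm_ring
    rw [this, h i j]
    split_ifs with hij <;> noncomm_ring
  simp_rw [key, Finset.sum_add_distrib, Finset.sum_ite_eq, Finset.mem_univ, if_true]

lemma sum4 {M : Type*} [AddCommMonoid M] {α β : Type*} [Fintype α] [Fintype β]
    (F : α → α → β → β → M) :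
    ∑ a : α, ∑ b : α, ∑ i : β, ∑ j : β, F a b i j
      = ∑ i : β, ∑ j : β, ∑ a : α, ∑ b : α, F a b i j :=
  calc ∑ a : α, ∑ b : α, ∑ i : β, ∑ j : β, F a b i j
      = ∑ a : α, ∑ i : β, ∑ b : α, ∑ j : β, F a b i j :=
        Finset.sum_congr rfl fun _ _ => Finset.sum_comm
    _ = ∑ i : β, ∑ a : α, ∑ b : α, ∑ j : β, F a b i j := Finset.sum_comm
    _ = ∑ i : β, ∑ a : α, ∑ j : β, ∑ b : α, F a b i j :=
        Finset.sum_congr rfl fun _ _ => Finset.sum_congr rfl fun _ _ => Finset.sum_comm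
    _ = ∑ i : β, ∑ j : β, ∑ a : α, ∑ b : α, F a b i j :=
        Finset.sum_congr rfl fun _ _ => Finset.sum_comm

end CasAux

open CasAux in
/-- On `P_{kn}`, the operators `I^{(k)} − k Σ_a e_{aa}^{(k)}` and
`I^{(n)} − n Σ_i e_{ii}^{(n)}` coincide, where `I^{(k)} = Σ_{a,b} e_{ab} e_{ba}`
and `I^{(n)} = Σ_{i,j} e_{ij} e_{ji}` are the Casimir elements realized as
differential operators. -/
theorem casimir_duality (k n : ℕ) :
    (∑ a : Fin k, ∑ b : Fin k, glkOp k n a b ∘ₗ glkOp k n b a)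
        - (k : ℂ) • (∑ a : Fin k, glkOp k n a a) =
      (∑ i : Fin n, ∑ j : Fin n, glnOp k n i j ∘ₗ glnOp k n j i)
        - (n : ℂ) • (∑ i : Fin n, glnOp k n i i) := by
  have hglk : ∀ a b : Fin k, glkOp k n a b = ∑ i : Fin n, Xc (a, i) * Dc (b, i) := by
    intro a b; rfl
  have hgln : ∀ i j : Fin n, glnOp k n i j = ∑ a : Fin k, Xc (a, i) * Dc (a, j) := by
    intro i j; rfl
  -- the common second-order term
  set T : Module.End ℂ (MvPolynomial (Fin k × Fin n) ℂ) :=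
    ∑ a : Fin k, ∑ b : Fin k, ∑ i : Fin n, ∑ j : Fin n,
      Xc (a, i) * Xc (b, j) * Dc (b, i) * Dc (a, j) with hT
  -- expand glk products
  have hk : ∀ a b : Fin k, glkOp k n a b ∘ₗ glkOp k n b a
      = (∑ i : Fin n, ∑ j : Fin n, Xc (a, i) * Xc (b, j) * Dc (b, i) * Dc (a, j))
        + ∑ i : Fin n, Xc (a, i) * Dc (a, i) := by
    intro a b
    rw [show glkOp k n a b ∘ₗ glkOp k n b a = glkOp k n a b * glkOp k n b a from rfl,
      hglk a b, hglk b a]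
    refine expand _ _ _ _ fun i j => ?_
    rw [DX]
    congr 1
    simp [Prod.ext_iff]
  have hn : ∀ i j : Fin n, glnOp k n i j ∘ₗ glnOp k n j i
      = (∑ a : Fin k, ∑ b : Fin k, Xc (a, i) * Xc (b, j) * Dc (a, j) * Dc (b, i))
        + ∑ a : Fin k, Xc (a, i) * Dc (a, i) := by
    intro i j
    rw [show glnOp k n i j ∘ₗ glnOp k n j i = glnOp k n i j * glnOp k n j i from rfl,
      hgln i j, hgln j i]
    refine expand _ _ _ _ fun a b => ?_
    rw [DX]
    congr 1
    simp [Prod.ext_iff]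
  have hS : (k : ℂ) • (∑ a : Fin k, glkOp k n a a)
      = ∑ a : Fin k, ∑ b : Fin k, ∑ i : Fin n, Xc (a, i) * Dc (a, i) := by
    simp_rw [hglk, Finset.sum_const, Finset.card_univ, Fintype.card_fin, Finset.smul_sum,
      Nat.cast_smul_eq_nsmul]
  have hS' : (n : ℂ) • (∑ i : Fin n, glnOp k n i i)
      = ∑ i : Fin n, ∑ j : Fin n, ∑ a : Fin k, Xc (a, i) * Dc (a, i) := by
    simp_rw [hgln, Finset.sum_const, Finset.card_univ, Fintype.card_fin, Finset.smul_sum,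
      Nat.cast_smul_eq_nsmul]
  calc (∑ a : Fin k, ∑ b : Fin k, glkOp k n a b ∘ₗ glkOp k n b a)
        - (k : ℂ) • (∑ a : Fin k, glkOp k n a a)
      = T := by
        simp_rw [hk, Finset.sum_add_distrib]
        rw [hS]
        abel
    _ = ∑ i : Fin n, ∑ j : Fin n, ∑ a : Fin k, ∑ b : Fin k,
          Xc (a, i) * Xc (b, j) * Dc (a, j) * Dc (b, i) := by
        rw [hT]
        have body : ∀ (a b : Fin k) (i j : Fin n),
            Xc (a, i) * Xc (b, j) * Dc (b, i) * Dc (a, j)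
              = Xc (a, i) * Xc (b, j) * Dc (a, j) * Dc (b, i) := by
          intro a b i j
          rw [mul_assoc, Dc_comm, ← mul_assoc]
        simp_rw [body]
        exact sum4 _
    _ = (∑ i : Fin n, ∑ j : Fin n, glnOp k n i j ∘ₗ glnOp k n j i)
        - (n : ℂ) • (∑ i : Fin n, glnOp k n i i) := by
        simp_rw [hn, Finset.sum_add_distrib]
        rw [hS']
        abel
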